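/- Assume V₀ ⊆ V is a Γ₀-invariant subspace such that: (i) V₀ is an internal direct sum of finitely many Γ₀-invariant subspaces, each of which is absolutely irreducible; and (ii) V = V₀ ⊕ ρ(z)(V₀) (internal direct sum). Then there exists a Γ₀-invariant subspace U₀ ⊆ V that is isomorphic to V₀ as a Γ₀-representation and such that V is the orthogonal direct sum of U₀ and ρ(z)(U₀), i.e. ρ(z)(U₀) = U₀ᗮ. -/

import Mathlib

noncomputable section OrthoAux

variable {V : Type*} [NormedAddCommGroup V] [InnerProductSpace ℝ V] [FiniteDimensional ℝ V]

/-- The orthogonal projection onto `K`, as an endomorphism of `V`. -/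
noncomputable def projL (K : Submodule ℝ V) : V →ₗ[ℝ] V :=
  K.subtype ∘ₗ K.orthogonalProjection.toLinearMap

lemma projL_apply (K : Submodule ℝ V) (x : V) : projL K x = (K.orthogonalProjection x : V) := rfl

lemma projL_mem (K : Submodule ℝ V) (x : V) : projL K x ∈ K := (K.orthogonalProjection x).2

lemma projL_isSymmetric (K : Submodule ℝ V) : (projL K).IsSymmetric :=
  fun x y => K.starProjection_isSymmetric x y

lemma sub_projL_mem (K : Submodule ℝ V) (x : V) : x - projL K x ∈ Kᗮ :=
  K.sub_starProjection_mem_orthogonal x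

lemma mem_orthogonal_of_projL_eq_zero (K : Submodule ℝ V) {x : V} (hx : projL K x = 0) :
    x ∈ Kᗮ := by
  have := sub_projL_mem K x
  rwa [hx, sub_zero] at this

/-- conjugation of orthogonal projections by a linear isometry equivalence -/
lemma projL_map (g : V ≃ₗᵢ[ℝ] V) (K : Submodule ℝ V) (x : V) :
    projL (K.map (g.toLinearEquiv : V →ₗ[ℝ] V)) (g x) = g (projL K x) := by
  rw [projL_apply]
  apply Submodule.eq_starProjection_of_mem_orthogonal
  · exact ⟨projL K x, projL_mem K x, rfl⟩
  · rintro w ⟨y, hy, rfl⟩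
    have h : (g.toLinearEquiv : V →ₗ[ℝ] V) y = g y := rfl
    rw [h, ← map_sub, g.inner_map_map]
    exact (sub_projL_mem K x) y hy

lemma inner_pos_of_eigenvalues_pos {E : Type*} [NormedAddCommGroup E] [InnerProductSpace ℝ E]
    [FiniteDimensional ℝ E] {T : E →ₗ[ℝ] E} (hT : T.IsSymmetric)
    (hpos : ∀ μ : ℝ, Module.End.HasEigenvalue T μ → 0 < μ) (x : E) (hx : x ≠ 0) :
    0 < (inner ℝ (T x) x : ℝ) := by
  classical
  have hrank : Module.finrank ℝ E = Module.finrank ℝ E := rfl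
  set b := hT.eigenvectorBasis hrank with hb
  have hinner : (inner ℝ (T x) x : ℝ) = ∑ i, hT.eigenvalues hrank i * (b.repr x i) ^ 2 := by
    have h1 : (inner ℝ (T x) x : ℝ) = inner ℝ (b.repr (T x)) (b.repr x) := by
      rw [b.repr.inner_map_map]
    rw [h1, PiLp.inner_apply]
    refine Finset.sum_congr rfl fun i _ => ?_
    rw [hT.eigenvectorBasis_apply_self_apply]
    simp [RCLike.inner_apply]
    ring
  rw [hinner]
  obtain ⟨i, hi⟩ : ∃ i, b.repr x i ≠ 0 := by
    by_contra h
    push_neg at h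
    exact hx (b.repr.map_eq_zero_iff.mp (by ext j; exact h j))
  refine Finset.sum_pos' (fun j _ => ?_) ⟨i, Finset.mem_univ i, ?_⟩
  · have := (hpos _ (hT.hasEigenvalue_eigenvalues hrank j)).le
    positivity
  · have h1 := hpos _ (hT.hasEigenvalue_eigenvalues hrank i)
    have h2 : (0:ℝ) < (b.repr x i) ^ 2 := by positivity
    positivity

end OrthoAux

open Module.End

/-- Orthogonal induction: let `ρ` be an orthogonal representation of `Γ` on a
finite-dimensional real inner ℝ product space `V`, `Γ₀ ≤ Γ` of index 2, `z ∉ Γ₀`, and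
`V₀ ⊆ V` a `Γ₀`-invariant subspace which is a direct sum of absolutely irreducible
`Γ₀`-subrepresentations and satisfies `V = V₀ ⊕ ρ(z)(V₀)`.  Then there is a
`Γ₀`-invariant subspace `U₀` isomorphic to `V₀` as a `Γ₀`-representation with
`V = U₀ ⊥ ρ(z)(U₀)`, i.e. `ρ(z)(U₀) = U₀ᗮ`. -/
theorem orthogonal_induction
    {V : Type*} [NormedAddCommGroup V] [InnerProductSpace ℝ V] [FiniteDimensional ℝ V]
    {Γ : Type*} [Group Γ] (ρ : Γ →* (V ≃ₗᵢ[ℝ] V))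
    (Γ₀ : Subgroup Γ) (hΓ₀ : Γ₀.index = 2) (z : Γ) (hz : z ∉ Γ₀)
    (V₀ : Submodule ℝ V)
    (hV₀ : ∀ γ ∈ Γ₀, ∀ v ∈ V₀, ρ γ v ∈ V₀)
    -- (i) V₀ is a direct sum of absolutely irreducible Γ₀-invariant subspaces
    (k : ℕ) (W : Fin k → Submodule ℝ V)
    (hWsum : iSup W = V₀)
    (hWindep : iSupIndep W)
    (hWinv : ∀ i, ∀ γ ∈ Γ₀, ∀ v ∈ W i, ρ γ v ∈ W i)
    (hWirr : ∀ i, W i ≠ ⊥ ∧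
      ∀ W' ≤ W i, (∀ γ ∈ Γ₀, ∀ v ∈ W', ρ γ v ∈ W') → W' = ⊥ ∨ W' = W i)
    (hWabs : ∀ i, ∀ φ : V →ₗ[ℝ] V, (∀ v ∈ W i, φ v ∈ W i) →
      (∀ γ ∈ Γ₀, ∀ v ∈ W i, φ (ρ γ v) = ρ γ (φ v)) →
      ∃ c : ℝ, ∀ v ∈ W i, φ v = c • v)
    -- (ii) V = V₀ ⊕ ρ(z)(V₀)
    (hcompl : IsCompl V₀ (V₀.map ((ρ z).toLinearEquiv : V →ₗ[ℝ] V))) :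
    ∃ (U₀ : Submodule ℝ V) (hU₀ : ∀ γ ∈ Γ₀, ∀ v ∈ U₀, ρ γ v ∈ U₀)
      (e : V₀ ≃ₗ[ℝ] U₀),
      (∀ γ (hγ : γ ∈ Γ₀) (v : V₀),
        ((e ⟨ρ γ (v : V), hV₀ γ hγ (v : V) v.2⟩ : U₀) : V) = ρ γ ((e v : U₀) : V)) ∧
      U₀.map ((ρ z).toLinearEquiv : V →ₗ[ℝ] V) = U₀ᗮ := by
  classical
  set σL : V →ₗ[ℝ] V := ((ρ z).toLinearEquiv : V →ₗ[ℝ] V) with hσLdef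
  set V₁ : Submodule ℝ V := V₀.map σL with hV₁def
  have hσLapp : ∀ x : V, σL x = ρ z x := fun x => rfl
  have hρmul : ∀ (a b : Γ) (v : V), ρ a (ρ b v) = ρ (a * b) v := by
    intro a b v
    rw [map_mul]
    rfl
  -- group facts
  have hzinv : z⁻¹ ∉ Γ₀ := fun h => hz (by simpa using Γ₀.inv_mem h)
  have hz2 : z * z ∈ Γ₀ := Subgroup.mul_self_mem_of_index_two hΓ₀ z
  have hconj : ∀ γ ∈ Γ₀, z⁻¹ * γ * z ∈ Γ₀ := by
    intro γ hγ
    have h1 : γ * z ∉ Γ₀ := fun h => hz (by simpa using Γ₀.mul_mem (Γ₀.inv_mem hγ) h)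
    have h2 : z⁻¹ * (γ * z) ∈ Γ₀ := by
      rw [Subgroup.mul_mem_iff_of_index_two hΓ₀]
      simp [hzinv, h1]
    rwa [← mul_assoc] at h2
  -- invariance of V₀ and V₁
  have hmapV₀ : ∀ γ ∈ Γ₀, V₀.map ((ρ γ).toLinearEquiv : V →ₗ[ℝ] V) = V₀ := by
    intro γ hγ
    apply le_antisymm
    · rintro x ⟨v, hv, rfl⟩
      exact hV₀ γ hγ v hv
    · intro v hv
      exact ⟨ρ γ⁻¹ v, hV₀ γ⁻¹ (Γ₀.inv_mem hγ) v hv, by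
        show ρ γ (ρ γ⁻¹ v) = v
        rw [hρmul]; simp⟩
  have hmapV₁ : ∀ γ ∈ Γ₀, V₁.map ((ρ γ).toLinearEquiv : V →ₗ[ℝ] V) = V₁ := by
    intro γ hγ
    apply le_antisymm
    · rintro x ⟨y, ⟨v, hv, rfl⟩, rfl⟩
      refine ⟨ρ (z⁻¹ * γ * z) v, hV₀ _ (hconj γ hγ) v hv, ?_⟩
      show ρ z (ρ (z⁻¹ * γ * z) v) = ρ γ (ρ z v)
      rw [hρmul, hρmul]
      congr 1
      group
    · rintro x ⟨v, hv, rfl⟩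
      refine ⟨ρ z (ρ (z⁻¹ * γ⁻¹ * z) v), ⟨ρ (z⁻¹ * γ⁻¹ * z) v,
        hV₀ _ (hconj γ⁻¹ (Γ₀.inv_mem hγ)) v hv, rfl⟩, ?_⟩
      show ρ γ (ρ z (ρ (z⁻¹ * γ⁻¹ * z) v)) = ρ z v
      rw [hρmul, hρmul]
      congr 1
      group
  have hmapV₁σ : V₁.map σL = V₀ := by
    apply le_antisymm
    · rintro x ⟨y, ⟨v, hv, rfl⟩, rfl⟩
      show ρ z (ρ z v) ∈ V₀
      rw [hρmul]
      exact hV₀ _ hz2 v hv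
    · intro v hv
      refine ⟨ρ z (ρ ((z*z)⁻¹) v), ⟨ρ ((z*z)⁻¹) v, hV₀ _ (Γ₀.inv_mem hz2) v hv, rfl⟩, ?_⟩
      show ρ z (ρ z (ρ ((z*z)⁻¹) v)) = v
      rw [hρmul, hρmul]
      have he : z * z * (z * z)⁻¹ = 1 := by group
      rw [he]
      simp
  -- the projections and the operator D
  set Q : V →ₗ[ℝ] V := projL V₀ with hQdef
  set Q' : V →ₗ[ℝ] V := projL V₁ with hQ'def
  set D : V →ₗ[ℝ] V := Q - Q' with hDdef
  have hDapp : ∀ x, D x = Q x - Q' x := fun x => rfl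
  have hQγ : ∀ γ ∈ Γ₀, ∀ x, Q (ρ γ x) = ρ γ (Q x) := by
    intro γ hγ x
    have h := projL_map (ρ γ) V₀ x
    rwa [hmapV₀ γ hγ] at h
  have hQ'γ : ∀ γ ∈ Γ₀, ∀ x, Q' (ρ γ x) = ρ γ (Q' x) := by
    intro γ hγ x
    have h := projL_map (ρ γ) V₁ x
    rwa [hmapV₁ γ hγ] at h
  have hσQ : ∀ x, Q' (ρ z x) = ρ z (Q x) := fun x => projL_map (ρ z) V₀ x
  have hσQ' : ∀ x, Q (ρ z x) = ρ z (Q' x) := by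
    intro x
    have h := projL_map (ρ z) V₁ x
    rwa [show V₁.map ((ρ z).toLinearEquiv : V →ₗ[ℝ] V) = V₀ from hmapV₁σ] at h
  have hDγ : ∀ γ ∈ Γ₀, ∀ x, D (ρ γ x) = ρ γ (D x) := by
    intro γ hγ x
    rw [hDapp, hDapp, hQγ γ hγ, hQ'γ γ hγ, ← map_sub]
  have hDσ : ∀ x, D (ρ z x) = - ρ z (D x) := by
    intro x
    rw [hDapp, hDapp, hσQ, hσQ', ← map_sub, ← map_neg]
    congr 1
    abel
  have hDsym : D.IsSymmetric := (projL_isSymmetric V₀).sub (projL_isSymmetric V₁)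
  -- D is injective
  have hkerD : ∀ x, D x = 0 → x = 0 := by
    intro x hx
    have hQQ' : Q x = Q' x := by
      have h : Q x - Q' x = 0 := by rw [← hDapp, hx]
      exact sub_eq_zero.mp h
    have hu0 : Q x ∈ V₀ := projL_mem _ _
    have hu1 : Q x ∈ V₁ := by rw [hQQ']; exact projL_mem _ _
    have hu : Q x = 0 := Submodule.disjoint_def.mp hcompl.disjoint _ hu0 hu1
    have hxo0 : x ∈ V₀ᗮ := mem_orthogonal_of_projL_eq_zero V₀ hu
    have hxo1 : x ∈ V₁ᗮ := mem_orthogonal_of_projL_eq_zero V₁ (hQQ' ▸ hu)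
    obtain ⟨a, ha, b, hb, hab⟩ := Submodule.mem_sup.1
      (hcompl.sup_eq_top ▸ Submodule.mem_top : x ∈ V₀ ⊔ V₁)
    have h1 : (inner ℝ x a : ℝ) = 0 := by
      rw [real_inner_comm]
      exact (Submodule.mem_orthogonal V₀ x).mp hxo0 a ha
    have h2 : (inner ℝ x b : ℝ) = 0 := by
      rw [real_inner_comm]
      exact (Submodule.mem_orthogonal V₁ x).mp hxo1 b hb
    have h3 : (inner ℝ x (a + b) : ℝ) = 0 := by
      rw [inner_add_right, h1, h2, add_zero]
    rw [hab] at h3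
    exact inner_self_eq_zero.1 h3
  -- eigenspaces of D
  have hEig : ∀ (μ : ℝ) (x : V), x ∈ eigenspace D μ ↔ D x = μ • x :=
    fun μ x => mem_eigenspace_iff
  have hE0 : eigenspace D (0:ℝ) = ⊥ := by
    ext x
    simp only [Submodule.mem_bot, hEig, zero_smul]
    exact ⟨hkerD x, fun h => by rw [h, map_zero]⟩
  set U₀ : Submodule ℝ V := ⨆ μ : {μ : ℝ // 0 < μ}, eigenspace D ↑μ with hU₀def
  set U₁ : Submodule ℝ V := ⨆ μ : {μ : ℝ // μ < 0}, eigenspace D ↑μ with hU₁def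
  -- Γ₀-invariance of U₀
  have hUγ : ∀ γ ∈ Γ₀, ∀ v ∈ U₀, ρ γ v ∈ U₀ := by
    intro γ hγ
    have hle : U₀ ≤ Submodule.comap ((ρ γ).toLinearEquiv : V →ₗ[ℝ] V) U₀ := by
      apply iSup_le
      rintro ⟨μ, hμ⟩ v hv
      rw [Submodule.mem_comap]
      refine le_iSup (fun μ : {μ : ℝ // 0 < μ} => eigenspace D ↑μ) ⟨μ, hμ⟩ ?_
      show ρ γ v ∈ eigenspace D μ
      rw [hEig] at hv ⊢
      rw [hDγ γ hγ, hv, map_smul]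
    intro v hv
    exact hle hv
  -- orthogonality of eigenspaces
  have horthE : ∀ {μ ν : ℝ}, μ ≠ ν → ∀ v ∈ eigenspace D μ, ∀ w ∈ eigenspace D ν,
      (inner ℝ v w : ℝ) = 0 := by
    intro μ ν hne v hv w hw
    have h1 : (inner ℝ (D v) w : ℝ) = inner ℝ v (D w) := hDsym v w
    rw [hEig] at hv hw
    rw [hv, hw, real_inner_smul_left, real_inner_smul_right] at h1
    by_contra h
    exact hne (mul_right_cancel₀ h h1)
  have hEneg_le : ∀ μ : ℝ, μ < 0 → eigenspace D μ ≤ U₀ᗮ := by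
    intro μ hμ
    have h1 : U₀ ≤ (eigenspace D μ)ᗮ := by
      apply iSup_le
      rintro ⟨ν, hν⟩ w hw
      rw [Submodule.mem_orthogonal]
      intro v hv
      exact horthE (ne_of_lt (lt_trans hμ hν)) v hv w hw
    exact le_trans (Submodule.le_orthogonal_orthogonal _) (Submodule.orthogonal_le h1)
  have hU₁orth : U₁ ≤ U₀ᗮ := by
    apply iSup_le
    rintro ⟨μ, hμ⟩
    exact hEneg_le μ hμ
  have hsupEig : (⨆ μ : ℝ, eigenspace D μ) = ⊤ := by
    have h := hDsym.orthogonalComplement_iSup_eigenspaces_eq_bot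
    rwa [Submodule.orthogonal_eq_bot_iff] at h
  have htop : U₀ ⊔ U₁ = ⊤ := by
    rw [eq_top_iff, ← hsupEig]
    apply iSup_le
    intro μ
    rcases lt_trichotomy μ 0 with h | h | h
    · exact le_trans (le_iSup (fun ν : {ν : ℝ // ν < 0} => eigenspace D ↑ν) ⟨μ, h⟩) le_sup_right
    · rw [h, hE0]; exact bot_le
    · exact le_trans (le_iSup (fun ν : {ν : ℝ // 0 < ν} => eigenspace D ↑ν) ⟨μ, h⟩) le_sup_left
  have hU₁eq : U₁ = U₀ᗮ := by
    refine le_antisymm hU₁orth ?_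
    intro x hx
    obtain ⟨a, ha, b, hb, hab⟩ := Submodule.mem_sup.1 (htop ▸ Submodule.mem_top : x ∈ U₀ ⊔ U₁)
    have h1 : (inner ℝ a x : ℝ) = 0 := (Submodule.mem_orthogonal U₀ x).mp hx a ha
    have h2 : (inner ℝ a b : ℝ) = 0 := (Submodule.mem_orthogonal U₀ b).mp (hU₁orth hb) a ha
    have h3 : (inner ℝ a a : ℝ) = 0 := by
      have h4 : (inner ℝ a (a + b) : ℝ) = inner ℝ a x := by rw [hab]
      rw [inner_add_right, h2, add_zero] at h4
      rw [h4]
      exact h1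
    have ha0 : a = 0 := inner_self_eq_zero.1 h3
    rw [← hab, ha0, zero_add]
    exact hb
  -- σ maps eigenspaces to opposite eigenspaces
  have hmapEig : ∀ μ : ℝ, (eigenspace D μ).map σL = eigenspace D (-μ) := by
    intro μ
    apply le_antisymm
    · rintro x ⟨v, hv, rfl⟩
      replace hv : D v = μ • v := (hEig _ _).mp hv
      show σL v ∈ eigenspace D (-μ)
      refine (hEig _ _).mpr ?_
      rw [hσLapp, hDσ, hv, map_smul, neg_smul]
    · intro w hw
      replace hw : D w = (-μ) • w := (hEig _ _).mp hw
      refine ⟨ρ z⁻¹ w, ?_, ?_⟩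
      · refine (hEig _ _).mpr ?_
        have h5 := hDσ (ρ z⁻¹ w)
        rw [hρmul] at h5
        have h5' : D w = - ρ z (D (ρ z⁻¹ w)) := by
          rw [← h5]
          congr 1
          rw [mul_inv_cancel]
          simp
        have h8 : D (ρ z⁻¹ w) = ρ z⁻¹ (- D w) := by
          have hc : ρ z⁻¹ (ρ z (D (ρ z⁻¹ w))) = D (ρ z⁻¹ w) := by
            rw [hρmul]
            simp
          rw [← hc]
          congr 1
          rw [h5', neg_neg]
        rw [h8, hw, map_neg, map_smul]
        simp
      · show σL (ρ z⁻¹ w) = w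
        rw [hσLapp, hρmul]
        simp
  have hmapU₀ : U₀.map σL = U₀ᗮ := by
    rw [hU₀def, Submodule.map_iSup, ← hU₁eq, hU₁def]
    apply le_antisymm
    · apply iSup_le
      rintro ⟨μ, hμ⟩
      rw [hmapEig]
      exact le_iSup (fun ν : {ν : ℝ // ν < 0} => eigenspace D ↑ν) ⟨-μ, neg_neg_of_pos hμ⟩
    · apply iSup_le
      rintro ⟨μ, hμ⟩
      have h9 : eigenspace D (μ:ℝ) = (eigenspace D (-μ)).map σL := by rw [hmapEig, neg_neg]
      rw [h9]
      exact le_iSup (fun ν : {ν : ℝ // 0 < ν} => (eigenspace D ↑ν).map σL) ⟨-μ, neg_pos.2 hμ⟩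
    -- D preserves U₀
  have hDU₀ : ∀ x ∈ U₀, D x ∈ U₀ := by
    intro x hx
    have hle : U₀ ≤ Submodule.comap D U₀ := by
      apply iSup_le
      rintro ⟨μ, hμ⟩ v hv
      rw [Submodule.mem_comap]
      refine le_iSup (fun ν : {ν : ℝ // 0 < ν} => eigenspace D ↑ν) ⟨μ, hμ⟩ ?_
      have hv' : D v = μ • v := (hEig _ _).mp hv
      refine (hEig _ _).mpr ?_
      rw [hv', map_smul, hv']
    exact hle hx
  set T : ↥U₀ →ₗ[ℝ] ↥U₀ := D.restrict hDU₀ with hTdef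
  have hTapp : ∀ u : ↥U₀, (T u : V) = D ↑u := fun u => rfl
  have hTsym : T.IsSymmetric := by
    intro u v
    have h1 : (inner ℝ (T u) v : ℝ) = inner ℝ (D ↑u) (↑v : V) := rfl
    have h2 : (inner ℝ u (T v) : ℝ) = inner ℝ (↑u : V) (D ↑v) := rfl
    rw [h1, h2]
    exact hDsym ↑u ↑v
  have hTpos : ∀ μ : ℝ, Module.End.HasEigenvalue T μ → 0 < μ := by
    intro μ hμ
    obtain ⟨v, hv⟩ := hμ.exists_hasEigenvector
    have hvE : (v : V) ∈ eigenspace D μ := by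
      refine (hEig _ _).mpr ?_
      have h1 : T v = μ • v := mem_eigenspace_iff.mp hv.1
      have h2 : (T v : V) = D ↑v := rfl
      rw [← h2, h1]
      rfl
    have hvne : (v : V) ≠ 0 := fun h => hv.2 (Subtype.ext h)
    rcases lt_trichotomy μ 0 with h | h | h
    · exfalso
      have h1 : (v : V) ∈ U₀ᗮ := hEneg_le μ h hvE
      exact hvne (Submodule.disjoint_def.mp (Submodule.orthogonal_disjoint U₀) _ v.2 h1)
    · exfalso
      rw [h, hE0] at hvE
      exact hvne ((Submodule.mem_bot ℝ).mp hvE)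
    · exact h
  -- injectivity of Q on U₀
  have hQinj : ∀ u : ↥U₀, Q ↑u = 0 → u = 0 := by
    intro u hu
    by_contra hne
    have hpos := inner_pos_of_eigenvalues_pos hTsym hTpos u hne
    have h1 : (inner ℝ (T u) u : ℝ) = inner ℝ (D ↑u) (↑u : V) := rfl
    have h2 : D ↑u = - Q' ↑u := by rw [hDapp, hu, zero_sub]
    have h3 : (inner ℝ (Q' ↑u) (↑u : V) : ℝ) = inner ℝ (Q' ↑u) (Q' (↑u:V) : V) := by
      have h4 : (inner ℝ (Q' ↑u) ((↑u : V) - Q' ↑u) : ℝ) = 0 :=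
        (Submodule.mem_orthogonal V₁ _).mp (sub_projL_mem V₁ ↑u) _ (projL_mem V₁ ↑u)
      have h5 : (inner ℝ (Q' ↑u) (↑u : V) : ℝ)
          = inner ℝ (Q' ↑u) (Q' (↑u:V) : V) + inner ℝ (Q' ↑u) ((↑u:V) - Q' ↑u) := by
        rw [← inner_add_right]
        congr 1
        abel
      rw [h5, h4, add_zero]
    have h6 : (inner ℝ (D ↑u) (↑u : V) : ℝ) ≤ 0 := by
      rw [h2, inner_neg_left, h3]
      have h7 : (0:ℝ) ≤ inner ℝ (Q' (↑u:V)) (Q' (↑u:V) : V) := real_inner_self_nonneg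
      linarith
    rw [h1] at hpos
    linarith
  -- rank computations
  have hrkσ : ∀ K : Submodule ℝ V, Module.finrank ℝ ↥(K.map σL) = Module.finrank ℝ ↥K :=
    fun K => LinearEquiv.finrank_map_eq ((ρ z).toLinearEquiv) K
  have hrkV : Module.finrank ℝ ↥V₀ + Module.finrank ℝ ↥V₁ = Module.finrank ℝ V :=
    Submodule.finrank_add_eq_of_isCompl hcompl
  have hrkU : Module.finrank ℝ ↥U₀ + Module.finrank ℝ ↥(U₀ᗮ) = Module.finrank ℝ V :=
    Submodule.finrank_add_finrank_orthogonal U₀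
  have hrank : Module.finrank ℝ ↥U₀ = Module.finrank ℝ ↥V₀ := by
    have e1 := hrkσ V₀
    rw [← hV₁def] at e1
    have e2 := hrkσ U₀
    rw [hmapU₀] at e2
    omega
  -- the equivalence
  let f : ↥U₀ →ₗ[ℝ] ↥V₀ :=
    LinearMap.codRestrict V₀ (Q.comp U₀.subtype) (fun u => projL_mem V₀ ↑u)
  have hfapp : ∀ u : ↥U₀, (f u : V) = Q ↑u := fun u => rfl
  have hfinj : Function.Injective f := by
    intro a b hab
    have h1 : f (a - b) = 0 := by rw [map_sub, hab, sub_self]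
    have h2 : Q ↑(a - b) = 0 := by
      have h3 := congrArg Subtype.val h1
      rw [hfapp] at h3
      exact h3
    have h4 := hQinj _ h2
    rwa [sub_eq_zero] at h4
  let g : ↥U₀ ≃ₗ[ℝ] ↥V₀ := LinearMap.linearEquivOfInjective f hfinj hrank
  have hgapp : ∀ u : ↥U₀, g u = f u :=
    fun u => LinearMap.linearEquivOfInjective_apply hfinj hrank u
  refine ⟨U₀, hUγ, g.symm, ?_, hmapU₀⟩
  intro γ hγ v
  set u : ↥U₀ := g.symm v with hudef
  have hgu : g u = v := g.apply_symm_apply v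
  have hQu : Q ↑u = (v : V) := by
    have h1 : f u = v := by rw [← hgu, hgapp]
    have h3 := congrArg Subtype.val h1
    rw [hfapp] at h3
    exact h3
  have hmem : ρ γ ↑u ∈ U₀ := hUγ γ hγ ↑u u.2
  have key : g.symm ⟨ρ γ (v:V), hV₀ γ hγ (v:V) v.2⟩ = ⟨ρ γ ↑u, hmem⟩ := by
    rw [LinearEquiv.symm_apply_eq, hgapp]
    apply Subtype.ext
    show (ρ γ (v:V)) = (f ⟨ρ γ ↑u, hmem⟩ : V)
    rw [hfapp]
    show ρ γ (v:V) = Q (ρ γ ↑u)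
    rw [hQγ γ hγ, hQu]
  rw [key]
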